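/- Let φ: ℝ⁴ → ℂ be integrable with |φ(x)|·e^{c√|x|} integrable, let L > 0, and define the periodization δ(x) = Σ_{n ∈ ℤ⁴} φ(x + nL). Then ∫_{[−L/2,L/2]⁴} |δ(x)| · e^{c√(|x|_L)} dx ≤ ∫_{ℝ⁴} |φ(x)| · e^{c√|x|} dx, where |x|_L = (L/π)(Σ_j sin²(π x_j/L))^{1/2}. -/

import Mathlib

open MeasureTheory

/-- The periodic norm `|a|_L = (L/π)·(Σ_j sin²(π a_j/L))^{1/2}` on `ℝ⁴`. -/
noncomputable def normL (L : ℝ) (a : EuclideanSpace ℝ (Fin 4)) : ℝ :=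
  L / Real.pi * Real.sqrt (∑ j, Real.sin (Real.pi * a j / L) ^ 2)

private lemma tile_mem_iff {L : ℝ} (hL : 0 < L) (t : ℝ) (n : ℤ) :
    t ∈ Set.Ico ((n : ℝ) * L - L/2) ((n : ℝ) * L + L/2) ↔ ⌊t/L + 1/2⌋ = n := by
  rw [Set.mem_Ico, Int.floor_eq_iff]
  have h : t / L + 1/2 = (t + L/2) / L := by
    rw [add_div]
    congr 1
    rw [eq_div_iff hL.ne']
    ring
  rw [h, le_div_iff₀ hL, div_lt_iff₀ hL]
  push_cast
  constructor <;> rintro ⟨h1, h2⟩ <;> constructor <;> nlinarith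

private lemma normL_periodic {L : ℝ} (hL : 0 < L) (x : EuclideanSpace ℝ (Fin 4))
    (n : Fin 4 → ℤ) :
    normL L (WithLp.toLp 2 (fun j => x j + (n j : ℝ) * L)) = normL L x := by
  unfold normL
  congr 2
  apply Finset.sum_congr rfl
  intro j _
  rw [PiLp.toLp_apply]
  have harg : Real.pi * (x j + (n j : ℝ) * L) / L = Real.pi * x j / L + (n j : ℝ) * Real.pi := by
    field_simp
  rw [harg, Real.sin_add_int_mul_pi, mul_pow]
  have hone : ((-1 : ℝ) ^ (n j)) ^ 2 = 1 := by
    rcases Int.even_or_odd (n j) with h | h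
    · rw [h.neg_one_zpow]; norm_num
    · rw [Odd.neg_one_zpow h]; norm_num
  rw [hone, one_mul]

private lemma normL_le_norm {L : ℝ} (hL : 0 < L) (y : EuclideanSpace ℝ (Fin 4)) :
    normL L y ≤ ‖y‖ := by
  have hπ := Real.pi_pos
  have hLπ : 0 < L / Real.pi := div_pos hL hπ
  rw [normL, EuclideanSpace.norm_eq]
  have h1 : ∑ j, Real.sin (Real.pi * y j / L) ^ 2 ≤ (Real.pi / L)^2 * ∑ j, ‖y j‖ ^ 2 := by
    rw [Finset.mul_sum]
    apply Finset.sum_le_sum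
    intro j _
    calc Real.sin (Real.pi * y j / L) ^ 2 ≤ (Real.pi * y j / L) ^ 2 := Real.sin_sq_le_sq
      _ = (Real.pi / L) ^ 2 * ‖y j‖ ^ 2 := by
          rw [Real.norm_eq_abs, sq_abs]; ring
  calc L / Real.pi * Real.sqrt (∑ j, Real.sin (Real.pi * y j / L) ^ 2)
      ≤ L / Real.pi * Real.sqrt ((Real.pi / L)^2 * ∑ j, ‖y j‖ ^ 2) :=
        mul_le_mul_of_nonneg_left (Real.sqrt_le_sqrt h1) hLπ.le
    _ = Real.sqrt (∑ j, ‖y j‖ ^ 2) := by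
        rw [Real.sqrt_mul (sq_nonneg _), Real.sqrt_sq (div_pos hπ hL).le, ← mul_assoc]
        rw [div_mul_div_comm, mul_comm L Real.pi, div_self (by positivity), one_mul]

private lemma ennnorm_tsum_le' {ι : Type*} (F : ι → ℂ) :
    (‖∑' i, F i‖₊ : ENNReal) ≤ ∑' i, (‖F i‖₊ : ENNReal) := by
  by_cases h : Summable fun i => ‖F i‖₊
  · rw [← ENNReal.coe_tsum h]
    exact_mod_cast nnnorm_tsum_le h
  · have htop : ∑' i, (‖F i‖₊ : ENNReal) = ⊤ := by
      by_contra hne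
      exact h (ENNReal.tsum_coe_ne_top_iff_summable.mp hne)
    rw [htop]; exact le_top

private lemma hyperplane_null (j : Fin 4) (a : ℝ) :
    (volume : Measure (EuclideanSpace ℝ (Fin 4))) {x | x j = a} = 0 := by
  have hmp := EuclideanSpace.volume_preserving_symm_measurableEquiv_toLp (Fin 4)
  have hs : MeasurableSet {y : Fin 4 → ℝ | y j = a} := by
    have : {y : Fin 4 → ℝ | y j = a} = (fun y : Fin 4 → ℝ => y j) ⁻¹' {a} := rfl
    rw [this]; exact measurable_pi_apply j (measurableSet_singleton a)
  have h1 : {x : EuclideanSpace ℝ (Fin 4) | x j = a} =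
      (MeasurableEquiv.toLp 2 (Fin 4 → ℝ)).symm ⁻¹' {y : Fin 4 → ℝ | y j = a} := rfl
  rw [h1, hmp.measure_preimage hs.nullMeasurableSet]
  have h2 : {y : Fin 4 → ℝ | y j = a} =
      Set.pi Set.univ (Function.update (fun _ : Fin 4 => (Set.univ : Set ℝ)) j {a}) := by
    ext y
    simp only [Set.mem_setOf_eq, Set.mem_pi, Set.mem_univ, forall_true_left]
    constructor
    · intro h i
      rcases eq_or_ne i j with rfl | hij
      · simp [h]
      · simp [Function.update_of_ne hij]
    · intro h
      have := h j
      simpa using this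
  rw [h2, volume_pi_pi]
  apply Finset.prod_eq_zero (Finset.mem_univ j)
  simp

theorem periodization_weighted_bound (c L : ℝ) (hc : 0 < c) (hL : 0 < L)
    (φ : EuclideanSpace ℝ (Fin 4) → ℂ)
    (hφ : Integrable φ)
    (hφw : Integrable (fun x : EuclideanSpace ℝ (Fin 4) =>
      ‖φ x‖ * Real.exp (c * Real.sqrt ‖x‖))) :
    ∫ x in ({x | ∀ j, x j ∈ Set.Icc (-L/2) (L/2)} : Set (EuclideanSpace ℝ (Fin 4))),
        ‖∑' n : Fin 4 → ℤ, φ (WithLp.toLp 2 (fun j => x j + (n j : ℝ) * L))‖ *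
          Real.exp (c * Real.sqrt (normL L x))
      ≤ ∫ x : EuclideanSpace ℝ (Fin 4), ‖φ x‖ * Real.exp (c * Real.sqrt ‖x‖) := by
  classical
  set Q : Set (EuclideanSpace ℝ (Fin 4)) := {x | ∀ j, x j ∈ Set.Icc (-L/2) (L/2)} with hQdef
  set w : EuclideanSpace ℝ (Fin 4) → ℝ :=
    fun x => Real.exp (c * Real.sqrt (normL L x)) with hwdef
  set δ : EuclideanSpace ℝ (Fin 4) → ℂ :=
    fun x => ∑' n : Fin 4 → ℤ, φ (WithLp.toLp 2 (fun j => x j + (n j : ℝ) * L)) with hδdef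
  by_cases hint : Integrable (fun x => ‖δ x‖ * w x) (volume.restrict Q)
  swap
  · rw [integral_undef hint]
    exact integral_nonneg fun x => mul_nonneg (norm_nonneg _) (Real.exp_pos _).le
  -- notation
  set v : (Fin 4 → ℤ) → EuclideanSpace ℝ (Fin 4) :=
    fun n => (WithLp.toLp 2 (fun j => (n j : ℝ) * L)) with hvdef
  have hxv : ∀ (x : EuclideanSpace ℝ (Fin 4)) (n : Fin 4 → ℤ),
      WithLp.toLp 2 (fun j => x j + (n j : ℝ) * L) = x + v n := fun x n => rfl
  set f : EuclideanSpace ℝ (Fin 4) → ENNReal :=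
    fun y => (‖φ y‖₊ : ENNReal) * ENNReal.ofReal (Real.exp (c * Real.sqrt ‖y‖)) with hfdef
  set Q' : Set (EuclideanSpace ℝ (Fin 4)) := {x | ∀ j, x j ∈ Set.Ico (-L/2) (L/2)} with hQ'def
  set T : (Fin 4 → ℤ) → Set (EuclideanSpace ℝ (Fin 4)) :=
    fun n => {x | ∀ j, x j ∈ Set.Ico ((n j : ℝ) * L - L/2) ((n j : ℝ) * L + L/2)} with hTdef
  -- measurability of the sets
  have hsetm : ∀ (s : Fin 4 → Set ℝ), (∀ j, MeasurableSet (s j)) →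
      MeasurableSet {x : EuclideanSpace ℝ (Fin 4) | ∀ j, x j ∈ s j} := by
    intro s hs
    have : {x : EuclideanSpace ℝ (Fin 4) | ∀ j, x j ∈ s j} =
        ⋂ j, (fun x : EuclideanSpace ℝ (Fin 4) => x j) ⁻¹' s j := by
      ext x; simp [Set.mem_iInter]
    rw [this]
    exact MeasurableSet.iInter fun j => ((measurable_pi_apply j).comp (WithLp.measurable_ofLp 2 _)) (hs j)
  have hQm : MeasurableSet Q := hsetm _ fun j => measurableSet_Icc
  have hQ'm : MeasurableSet Q' := hsetm _ fun j => measurableSet_Ico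
  have hTm : ∀ n, MeasurableSet (T n) := fun n => hsetm _ fun j => measurableSet_Ico
  -- tiles
  have hmem : ∀ n (x : EuclideanSpace ℝ (Fin 4)),
      x ∈ T n ↔ ∀ j, ⌊x j / L + 1/2⌋ = n j := by
    intro n x
    exact forall_congr' fun j => tile_mem_iff hL (x j) (n j)
  have hTdisj : Pairwise (Function.onFun Disjoint T) := by
    intro n m hnm
    rw [Function.onFun, Set.disjoint_left]
    intro x hxn hxm
    exact hnm (funext fun j => ((hmem n x).1 hxn j).symm.trans ((hmem m x).1 hxm j))
  have hTunion : (⋃ n, T n) = Set.univ := by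
    ext x
    simp only [Set.mem_iUnion, Set.mem_univ, iff_true]
    exact ⟨fun j => ⌊x j / L + 1/2⌋, (hmem _ x).2 fun j => rfl⟩
  -- Q and Q' agree a.e.
  have hQQ' : Q =ᵐ[volume] Q' := by
    rw [MeasureTheory.ae_eq_set]
    constructor
    · refine measure_mono_null ?_ (measure_iUnion_null fun j => hyperplane_null j (L/2))
      intro x hx
      rcases hx with ⟨hxQ, hxQ'⟩
      rw [hQ'def, Set.mem_setOf_eq] at hxQ'
      push_neg at hxQ'
      obtain ⟨j, hj⟩ := hxQ'
      rw [Set.mem_iUnion]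
      refine ⟨j, ?_⟩
      have h1 := hxQ j
      rw [Set.mem_Icc] at h1
      rw [Set.mem_Ico] at hj
      have : x j = L/2 := by
        rcases lt_or_ge (x j) (L/2) with h | h
        · exact absurd ⟨h1.1, h⟩ hj
        · linarith [h1.2]
      exact this
    · refine measure_mono_null ?_ measure_empty
      intro x hx
      rcases hx with ⟨hxQ', hxQ⟩
      exact absurd (fun j => Set.Ico_subset_Icc_self (hxQ' j)) hxQ
  -- measurability of w
  have hwm : Measurable w := by
    apply Real.measurable_exp.comp
    apply Measurable.const_mul
    apply Real.continuous_sqrt.measurable.comp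
    apply Measurable.const_mul
    apply Real.continuous_sqrt.measurable.comp
    apply Finset.measurable_sum
    intro j _
    exact (Real.measurable_sin.comp
      ((((measurable_pi_apply (X := fun _ : Fin 4 => ℝ) j).comp (WithLp.measurable_ofLp 2 (Fin 4 → ℝ))).const_mul Real.pi).div_const L)).pow_const 2
  -- translation step
  have hstep_translate : ∀ n, (∫⁻ x in Q', f (x + v n)) = ∫⁻ y in T n, f y := by
    intro n
    have hpre : (fun x : EuclideanSpace ℝ (Fin 4) => x + v n) ⁻¹' T n = Q' := by
      ext x
      simp only [Set.mem_preimage, hTdef, hQ'def, Set.mem_setOf_eq, Set.mem_Ico]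
      constructor
      · intro h j
        have h1 := h j
        have hc1 : (x + v n) j = x j + (n j : ℝ) * L := rfl
        rw [hc1] at h1
        constructor <;> linarith [h1.1, h1.2]
      · intro h j
        have h1 := h j
        have hc1 : (x + v n) j = x j + (n j : ℝ) * L := rfl
        rw [hc1]
        constructor <;> linarith [h1.1, h1.2]
    have := (measurePreserving_add_right volume (v n)).setLIntegral_comp_preimage_emb
      (MeasurableEquiv.addRight (v n)).measurableEmbedding f (T n)
    rwa [hpre] at this
  -- sum over tiles
  have hstep_sum : ∑' n, (∫⁻ y in T n, f y) = ∫⁻ y, f y := by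
    rw [← lintegral_iUnion hTm hTdisj f, hTunion, Measure.restrict_univ]
  -- pointwise bound
  have hptwise : ∀ (n : Fin 4 → ℤ) (x : EuclideanSpace ℝ (Fin 4)),
      (‖φ (WithLp.toLp 2 (fun j => x j + (n j : ℝ) * L))‖₊ : ENNReal) * ENNReal.ofReal (w x)
        ≤ f (x + v n) := by
    intro n x
    rw [hxv x n, hfdef]
    apply mul_le_mul_right
    apply ENNReal.ofReal_le_ofReal
    rw [hwdef]
    apply Real.exp_le_exp.2
    apply mul_le_mul_of_nonneg_left _ hc.le
    apply Real.sqrt_le_sqrt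
    calc normL L x = normL L (WithLp.toLp 2 (fun j => x j + (n j : ℝ) * L)) := (normL_periodic hL x n).symm
      _ = normL L (x + v n) := by rw [hxv x n]
      _ ≤ ‖x + v n‖ := normL_le_norm hL _
  -- a.e. measurability of the terms
  have hterm_meas : ∀ n : Fin 4 → ℤ, AEMeasurable
      (fun x : EuclideanSpace ℝ (Fin 4) =>
        (‖φ (WithLp.toLp 2 (fun j => x j + (n j : ℝ) * L))‖₊ : ENNReal) * ENNReal.ofReal (w x))
      (volume.restrict Q) := by
    intro n
    have hcomp : AEStronglyMeasurable (fun x : EuclideanSpace ℝ (Fin 4) => φ (x + v n))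
        volume := by
      exact hφ.aestronglyMeasurable.comp_quasiMeasurePreserving
        (measurePreserving_add_right volume (v n)).quasiMeasurePreserving
    have h1 : AEMeasurable (fun x : EuclideanSpace ℝ (Fin 4) =>
        (‖φ (x + v n)‖₊ : ENNReal)) volume := hcomp.enorm
    have h2 := h1.restrict (s := Q)
    have h3 : AEMeasurable (fun x : EuclideanSpace ℝ (Fin 4) =>
        ENNReal.ofReal (w x)) (volume.restrict Q) :=
      (ENNReal.measurable_ofReal.comp hwm).aemeasurable
    have h4 := h2.mul h3
    apply h4.congr
    filter_upwards with x
    rw [hxv x n]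
    rfl
  -- the main chain of inequalities on lintegrals
  have key : (∫⁻ x in Q, ENNReal.ofReal (‖δ x‖ * w x))
      ≤ ∫⁻ y, ENNReal.ofReal (‖φ y‖ * Real.exp (c * Real.sqrt ‖y‖)) := by
    have hrhs : ∀ y, ENNReal.ofReal (‖φ y‖ * Real.exp (c * Real.sqrt ‖y‖)) = f y := by
      intro y
      rw [hfdef, ENNReal.ofReal_mul (norm_nonneg _), ofReal_norm, enorm_eq_nnnorm]
    simp only [hrhs]
    calc (∫⁻ x in Q, ENNReal.ofReal (‖δ x‖ * w x))
        ≤ ∫⁻ x in Q, ∑' n : Fin 4 → ℤ,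
            (‖φ (WithLp.toLp 2 (fun j => x j + (n j : ℝ) * L))‖₊ : ENNReal) * ENNReal.ofReal (w x) := by
          apply lintegral_mono
          intro x
          dsimp only
          rw [ENNReal.ofReal_mul (norm_nonneg _), ofReal_norm, enorm_eq_nnnorm]
          rw [ENNReal.tsum_mul_right]
          exact mul_le_mul_left (ennnorm_tsum_le' _) _
      _ = ∑' n : Fin 4 → ℤ, ∫⁻ x in Q,
            (‖φ (WithLp.toLp 2 (fun j => x j + (n j : ℝ) * L))‖₊ : ENNReal) * ENNReal.ofReal (w x) :=
          lintegral_tsum hterm_meas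
      _ ≤ ∑' n : Fin 4 → ℤ, ∫⁻ x in Q, f (x + v n) :=
          ENNReal.tsum_le_tsum fun n => lintegral_mono fun x => hptwise n x
      _ = ∑' n : Fin 4 → ℤ, ∫⁻ x in Q', f (x + v n) := by
          apply tsum_congr
          intro n
          rw [Measure.restrict_congr_set hQQ']
      _ = ∑' n : Fin 4 → ℤ, ∫⁻ y in T n, f y := tsum_congr hstep_translate
      _ = ∫⁻ y, f y := hstep_sum
  -- convert both sides
  have hLHS : (∫ x in Q, ‖δ x‖ * w x)
      = (∫⁻ x in Q, ENNReal.ofReal (‖δ x‖ * w x)).toReal := by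
    rw [integral_eq_lintegral_of_nonneg_ae]
    · filter_upwards with x
      exact mul_nonneg (norm_nonneg _) (Real.exp_pos _).le
    · exact hint.aestronglyMeasurable
  have hRHS : (∫ y : EuclideanSpace ℝ (Fin 4), ‖φ y‖ * Real.exp (c * Real.sqrt ‖y‖))
      = (∫⁻ y, ENNReal.ofReal (‖φ y‖ * Real.exp (c * Real.sqrt ‖y‖))).toReal := by
    rw [integral_eq_lintegral_of_nonneg_ae]
    · filter_upwards with y
      exact mul_nonneg (norm_nonneg _) (Real.exp_pos _).le
    · exact hφw.aestronglyMeasurable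
  have hfin : (∫⁻ y, ENNReal.ofReal (‖φ y‖ * Real.exp (c * Real.sqrt ‖y‖))) ≠ ⊤ := by
    have h1 := hφw.2
    rw [HasFiniteIntegral] at h1
    have h2 : ∀ y : EuclideanSpace ℝ (Fin 4),
        ENNReal.ofReal (‖φ y‖ * Real.exp (c * Real.sqrt ‖y‖))
          = (‖(‖φ y‖ * Real.exp (c * Real.sqrt ‖y‖))‖₊ : ENNReal) := by
      intro y
      rw [← enorm_eq_nnnorm, ← ofReal_norm, Real.norm_of_nonneg
        (mul_nonneg (norm_nonneg _) (Real.exp_pos _).le)]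
    simp only [h2]
    exact h1.ne
  rw [hLHS, hRHS]
  exact ENNReal.toReal_mono hfin key
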